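/- arXiv:2604.13355 — 2 statements merged into one kernel-verified Lean document; each statement's English description precedes it below -/
import Mathlib

section
/- Let {Z_t : t = 0,1,…} be a sequence of real random variables adapted to a filtration, with Z_0 deterministic and increments ΔZ_t := Z_t − Z_{t−1} satisfying ΔZ_t ≤ M almost surely. Suppose that for all t ≥ 1, E[ΔZ_t | F_{t−1}] ≤ −δ · E[(ΔZ_t)² | F_{t−1}] for some 0 < δ < 1/M. Then for all ξ ≥ 0 and all t, Pr(Z_t − Z_0 > ξ) ≤ exp(−δ ξ). -/
open MeasureTheory

lemma exp_le_one_add_add_sq {x : ℝ} (hx : x ≤ 1) : Real.exp x ≤ 1 + x + x ^ 2 := by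
  rcases le_or_gt x (-1) with h | h
  · have h1 : Real.exp x ≤ 1 := Real.exp_le_one_iff.mpr (by linarith)
    nlinarith [mul_nonneg (by linarith : (0:ℝ) ≤ -x) (by linarith : (0:ℝ) ≤ -(x + 1))]
  · have habs : |x| ≤ 1 := abs_le.mpr ⟨h.le, hx⟩
    have h2 := Real.exp_bound habs (n := 2) (by norm_num)
    have hs : (∑ m ∈ Finset.range 2, x ^ m / m.factorial) = 1 + x := by
      simp [Finset.sum_range_succ]
    rw [hs] at h2
    have h3 : |x| ^ 2 = x ^ 2 := sq_abs x
    have h4 := (abs_sub_le_iff.1 h2).1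
    rw [h3] at h4
    norm_num [Nat.factorial] at h4
    nlinarith [sq_nonneg x]

/-- Freedman-type inequality: if `(Z t)` is adapted to a filtration with `Z 0`
deterministic, increments `ΔZ t := Z t − Z (t−1)` bounded above by `M`, and the
conditional drift satisfies `E[ΔZ t | ℱ (t−1)] ≤ −δ · E[(ΔZ t)² | ℱ (t−1)]` for some
`0 < δ < 1/M`, then for all `ξ ≥ 0` and all `t`,
`Pr(Z t − Z 0 > ξ) ≤ exp (−δ ξ)`. -/
theorem stmt8 {Ω : Type*} {mΩ : MeasurableSpace Ω} (μ : Measure Ω)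
    [IsProbabilityMeasure μ]
    (ℱ : Filtration ℕ mΩ) (Z : ℕ → Ω → ℝ) (hadapt : Adapted ℱ Z)
    (c : ℝ) (hZ0 : ∀ ω, Z 0 ω = c)
    (M δ : ℝ) (hM : 0 < M) (hδ : 0 < δ) (hδM : δ < 1 / M)
    (hint : ∀ t, Integrable (Z t) μ)
    (hint2 : ∀ t, Integrable (fun ω => (Z t ω - Z (t - 1) ω) ^ 2) μ)
    (hbdd : ∀ t, 1 ≤ t → ∀ᵐ ω ∂μ, Z t ω - Z (t - 1) ω ≤ M)
    (hdrift : ∀ t, 1 ≤ t → ∀ᵐ ω ∂μ,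
      (μ[fun ω => Z t ω - Z (t - 1) ω | ℱ (t - 1)]) ω ≤
        -δ * (μ[fun ω => (Z t ω - Z (t - 1) ω) ^ 2 | ℱ (t - 1)]) ω) :
    ∀ ξ : ℝ, 0 ≤ ξ → ∀ t : ℕ,
      (μ {ω | ξ < Z t ω - Z 0 ω}).toReal ≤ Real.exp (-δ * ξ) := by
  have hδM1 : δ * M < 1 := (lt_div_iff₀ hM).mp hδM
  set W : ℕ → Ω → ℝ := fun t ω => Real.exp (δ * (Z t ω - Z 0 ω)) with hW
  have hZm : ∀ s, AEStronglyMeasurable (Z s) μ := fun s => (hint s).1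
  -- a.e. bound on Z t − Z 0
  have hsum : ∀ t : ℕ, ∀ᵐ ω ∂μ, Z t ω - Z 0 ω ≤ M * t := by
    intro t
    induction t with
    | zero => simp
    | succ n ih =>
      have hb := hbdd (n + 1) (by omega)
      simp only [Nat.add_sub_cancel] at hb
      filter_upwards [ih, hb] with ω h1 h2
      push_cast
      nlinarith
  have hWbdd : ∀ t : ℕ, ∀ᵐ ω ∂μ, ‖W t ω‖ ≤ Real.exp (δ * (M * t)) := by
    intro t
    filter_upwards [hsum t] with ω h
    rw [Real.norm_eq_abs, abs_of_pos (Real.exp_pos _)]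
    exact Real.exp_le_exp.mpr (mul_le_mul_of_nonneg_left h hδ.le)
  have hWaem : ∀ t, AEStronglyMeasurable (W t) μ := fun t =>
    Real.continuous_exp.comp_aestronglyMeasurable (((hZm t).sub (hZm 0)).const_mul δ)
  have hWint : ∀ t, Integrable (W t) μ := fun t =>
    Integrable.mono' (integrable_const (Real.exp (δ * (M * t)))) (hWaem t) (hWbdd t)
  -- conditional exponential bound
  have hcond : ∀ n : ℕ, ∀ᵐ ω ∂μ,
      (μ[fun ω => Real.exp (δ * (Z (n + 1) ω - Z n ω)) | ℱ n]) ω ≤ 1 := by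
    intro n
    have hd_int : Integrable (fun ω => Z (n + 1) ω - Z n ω) μ := (hint (n + 1)).sub (hint n)
    have hq_int : Integrable (fun ω => (Z (n + 1) ω - Z n ω) ^ 2) μ := by
      have := hint2 (n + 1)
      simpa using this
    have hb := hbdd (n + 1) (by omega)
    simp only [Nat.add_sub_cancel] at hb
    have hdr := hdrift (n + 1) (by omega)
    simp only [Nat.add_sub_cancel] at hdr
    have hg_int : Integrable (fun ω => Real.exp (δ * (Z (n + 1) ω - Z n ω))) μ := by
      refine Integrable.mono' (integrable_const (Real.exp (δ * M))) ?_ ?_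
      · exact Real.continuous_exp.comp_aestronglyMeasurable
          (((hZm (n + 1)).sub (hZm n)).const_mul δ)
      · filter_upwards [hb] with ω h
        rw [Real.norm_eq_abs, abs_of_pos (Real.exp_pos _)]
        exact Real.exp_le_exp.mpr (mul_le_mul_of_nonneg_left h hδ.le)
    have hh_int : Integrable
        (fun ω => 1 + δ * (Z (n + 1) ω - Z n ω) + δ ^ 2 * (Z (n + 1) ω - Z n ω) ^ 2) μ :=
      ((integrable_const 1).add (hd_int.const_mul δ)).add (hq_int.const_mul (δ ^ 2))
    have hg_le : (fun ω => Real.exp (δ * (Z (n + 1) ω - Z n ω))) ≤ᵐ[μ]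
        fun ω => 1 + δ * (Z (n + 1) ω - Z n ω) + δ ^ 2 * (Z (n + 1) ω - Z n ω) ^ 2 := by
      filter_upwards [hb] with ω h
      have hx : δ * (Z (n + 1) ω - Z n ω) ≤ 1 :=
        le_trans (mul_le_mul_of_nonneg_left h hδ.le) hδM1.le
      calc Real.exp (δ * (Z (n + 1) ω - Z n ω))
          ≤ 1 + δ * (Z (n + 1) ω - Z n ω) + (δ * (Z (n + 1) ω - Z n ω)) ^ 2 :=
            exp_le_one_add_add_sq hx
        _ = 1 + δ * (Z (n + 1) ω - Z n ω) + δ ^ 2 * (Z (n + 1) ω - Z n ω) ^ 2 := by ring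
    have hmono := condExp_mono (m := ℱ n) hg_int hh_int hg_le
    have e1 : (fun ω => 1 + δ * (Z (n + 1) ω - Z n ω) + δ ^ 2 * (Z (n + 1) ω - Z n ω) ^ 2)
        = ((fun _ => (1:ℝ)) + δ • fun ω => Z (n + 1) ω - Z n ω)
          + (δ ^ 2) • fun ω => (Z (n + 1) ω - Z n ω) ^ 2 := by
      funext ω
      simp [smul_eq_mul]
    rw [e1] at hmono
    have hA := condExp_add (m := ℱ n) (μ := μ)
      ((integrable_const (1:ℝ)).add (hd_int.smul δ)) (hq_int.smul (δ ^ 2))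
    have hB := condExp_add (m := ℱ n) (μ := μ) (integrable_const (1:ℝ)) (hd_int.smul δ)
    have c3 := condExp_const (μ := μ) (ℱ.le n) (1:ℝ)
    have c4 := condExp_smul (m := ℱ n) (μ := μ) δ (fun ω => Z (n + 1) ω - Z n ω)
    have c5 := condExp_smul (m := ℱ n) (μ := μ) (δ ^ 2) (fun ω => (Z (n + 1) ω - Z n ω) ^ 2)
    have hqnn : (0 : Ω → ℝ) ≤ᵐ[μ] μ[fun ω => (Z (n + 1) ω - Z n ω) ^ 2 | ℱ n] :=
      condExp_nonneg (ae_of_all μ fun ω => sq_nonneg _)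
    filter_upwards [hmono, hA, hB, c4, c5, hdr, hqnn] with ω h1 h2 h3 h4 h5 h6 h7
    simp only [Pi.add_apply, Pi.smul_apply, smul_eq_mul, Pi.zero_apply] at h1 h2 h3 h4 h5 h7
    rw [c3] at h3
    simp only [Pi.add_apply] at h3
    nlinarith [mul_le_mul_of_nonneg_left h6 hδ.le]
  -- main induction: E[W t] ≤ 1
  have key : ∀ t : ℕ, ∫ ω, W t ω ∂μ ≤ 1 := by
    intro t
    induction t with
    | zero => simp [hW]
    | succ n ih =>
      have hWsm : StronglyMeasurable[ℱ n] (W n) := by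
        have : W n = fun ω => Real.exp (δ * (Z n ω - c)) := by
          funext ω; simp [hW, hZ0]
        rw [this]
        exact Real.continuous_exp.comp_stronglyMeasurable
          (((hadapt n).sub measurable_const).const_mul δ).stronglyMeasurable
      have hg_int : Integrable (fun ω => Real.exp (δ * (Z (n + 1) ω - Z n ω))) μ := by
        have hb := hbdd (n + 1) (by omega)
        simp only [Nat.add_sub_cancel] at hb
        refine Integrable.mono' (integrable_const (Real.exp (δ * M))) ?_ ?_
        · exact Real.continuous_exp.comp_aestronglyMeasurable
            (((hZm (n + 1)).sub (hZm n)).const_mul δ)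
        · filter_upwards [hb] with ω h
          rw [Real.norm_eq_abs, abs_of_pos (Real.exp_pos _)]
          exact Real.exp_le_exp.mpr (mul_le_mul_of_nonneg_left h hδ.le)
      have hprod : W (n + 1) = (W n) * fun ω => Real.exp (δ * (Z (n + 1) ω - Z n ω)) := by
        funext ω
        simp only [hW, Pi.mul_apply, ← Real.exp_add]
        congr 1
        ring
      have hfg_int : Integrable ((W n) * fun ω => Real.exp (δ * (Z (n + 1) ω - Z n ω))) μ :=
        hg_int.bdd_mul (hWaem n) (hWbdd n)
      have hpull := condExp_mul_of_stronglyMeasurable_left hWsm hfg_int hg_int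
      have hstep1 : ∫ ω, W (n + 1) ω ∂μ
          = ∫ ω, ((W n) * fun ω => Real.exp (δ * (Z (n + 1) ω - Z n ω))) ω ∂μ := by
        rw [hprod]
      have hstep2 : ∫ ω, ((W n) * fun ω => Real.exp (δ * (Z (n + 1) ω - Z n ω))) ω ∂μ
          = ∫ ω, (μ[(W n) * fun ω => Real.exp (δ * (Z (n + 1) ω - Z n ω)) | ℱ n]) ω ∂μ :=
        (integral_condExp (ℱ.le n)).symm
      have hstep3 : ∫ ω, (μ[(W n) * fun ω => Real.exp (δ * (Z (n + 1) ω - Z n ω)) | ℱ n]) ω ∂μ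
          = ∫ ω, W n ω * (μ[fun ω => Real.exp (δ * (Z (n + 1) ω - Z n ω)) | ℱ n]) ω ∂μ := by
        refine integral_congr_ae ?_
        filter_upwards [hpull] with ω h
        simpa using h
      have hstep4 : ∫ ω, W n ω * (μ[fun ω => Real.exp (δ * (Z (n + 1) ω - Z n ω)) | ℱ n]) ω ∂μ
          ≤ ∫ ω, W n ω ∂μ := by
        refine integral_mono_ae ?_ (hWint n) ?_
        · exact integrable_condExp.bdd_mul (hWaem n) (hWbdd n)
        · filter_upwards [hcond n] with ω h
          have := mul_le_mul_of_nonneg_left h (le_of_lt (Real.exp_pos (δ * (Z n ω - Z 0 ω))))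
          simpa [hW] using this
      calc ∫ ω, W (n + 1) ω ∂μ
          = ∫ ω, W n ω * (μ[fun ω => Real.exp (δ * (Z (n + 1) ω - Z n ω)) | ℱ n]) ω ∂μ := by
            rw [hstep1, hstep2, hstep3]
        _ ≤ ∫ ω, W n ω ∂μ := hstep4
        _ ≤ 1 := ih
  -- Markov's inequality
  intro ξ hξ t
  have hsub : {ω | ξ < Z t ω - Z 0 ω} ⊆ {ω | Real.exp (δ * ξ) ≤ W t ω} := by
    intro ω hω
    exact Real.exp_le_exp.mpr (mul_le_mul_of_nonneg_left (le_of_lt hω) hδ.le)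
  have hmarkov := mul_meas_ge_le_integral_of_nonneg
    (ae_of_all μ fun ω => (Real.exp_pos _).le) (hWint t) (Real.exp (δ * ξ))
  have h1 : (μ {ω | ξ < Z t ω - Z 0 ω}).toReal
      ≤ (μ {ω | Real.exp (δ * ξ) ≤ W t ω}).toReal :=
    ENNReal.toReal_mono (measure_ne_top μ _) (measure_mono hsub)
  have h2 : Real.exp (δ * ξ) * (μ {ω | Real.exp (δ * ξ) ≤ W t ω}).toReal ≤ 1 :=
    hmarkov.trans (key t)
  have h3 : (μ {ω | Real.exp (δ * ξ) ≤ W t ω}).toReal ≤ Real.exp (-δ * ξ) := by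
    have hepos := Real.exp_pos (δ * ξ)
    rw [mul_comm] at h2
    have h4 : (μ {ω | Real.exp (δ * ξ) ≤ W t ω}).toReal ≤ 1 / Real.exp (δ * ξ) :=
      (le_div_iff₀ hepos).mpr h2
    calc (μ {ω | Real.exp (δ * ξ) ≤ W t ω}).toReal ≤ 1 / Real.exp (δ * ξ) := h4
      _ = Real.exp (-δ * ξ) := by rw [neg_mul, Real.exp_neg, one_div]
  exact h1.trans h3
end

section
/- Let v₁,…,v_n ∈ R^d be vectors with ‖v_i‖₂ ≤ 1 for all i. Suppose x ∈ {−1,1}^n achieves prefix discrepancy bound ‖∑_{i=1}^t x_i v_i‖₂ ≤ E for all t ∈ [n] on every reordering instance needed. If additionally ∑_i v_i = 0 and π is the permutation obtained by placing the +1-colored vectors of x in order followed by the reversal construction of Chobanyan, then there exists a permutation π with ‖∑_{i=1}^t v_{π(i)}‖₂ ≤ E for all t. In particular, the optimal Steinitz constant S(‖·‖₂) is at most the optimal prefix discrepancy constant E(‖·‖₂). -/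
open List Finset

lemma chb_take_filter {α : Type*} (p : α → Bool) :
    ∀ (l : List α) (t : ℕ), ∃ s ≤ l.length, (l.filter p).take t = (l.take s).filter p := by
  intro l
  induction l with
  | nil => intro t; exact ⟨0, le_rfl, by simp⟩
  | cons a l ih =>
    intro t
    by_cases hp : p a
    · cases t with
      | zero => exact ⟨0, Nat.zero_le _, by simp⟩
      | succ t =>
        obtain ⟨s, hs, h⟩ := ih t
        exact ⟨s + 1, by simpa using hs, by simp [List.filter_cons, hp, h]⟩
    · obtain ⟨s, hs, h⟩ := ih t
      exact ⟨s + 1, by simpa using hs, by simp [List.filter_cons, hp, h]⟩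

lemma chb_filter_sum {M : Type*} [AddCommMonoid M] (p : ℕ → Bool) (f : ℕ → M) (l : List ℕ) :
    ((l.filter p).map f).sum = (l.map fun a => if p a then f a else 0).sum := by
  induction l with
  | nil => simp
  | cons a l ih => by_cases hp : p a <;> simp [List.filter_cons, hp, ih]

lemma chb_range_sum {M : Type*} [AddCommMonoid M] (f : ℕ → M) (s : ℕ) :
    ((List.range s).map f).sum = ∑ j ∈ Finset.range s, f j := rfl

lemma chb_step {V : Type*} [NormedAddCommGroup V] [NormedSpace ℝ V]
    (n : ℕ) (E b : ℝ) (w : ℕ → V)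
    (hzero : ∑ i ∈ Finset.range n, w i = 0)
    (hpre : ∀ m ≤ n, ‖∑ i ∈ Finset.range m, w i‖ ≤ b)
    (x : ℕ → ℝ) (hx : ∀ i, x i = 1 ∨ x i = -1)
    (hT : ∀ m ≤ n, ‖∑ i ∈ Finset.range m, x i • w i‖ ≤ E) :
    ∃ J : List ℕ, J ~ List.range n ∧
      ∀ m ≤ n, ‖((J.take m).map w).sum‖ ≤ (b + E) / 2 := by
  classical
  set p : ℕ → Bool := fun k => decide (x k = 1) with hp
  set l₁ : List ℕ := (List.range n).filter p with hl₁
  set l₃ : List ℕ := (List.range n).filter (fun k => !p k) with hl₃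
  -- the two half bounds
  have hpos : ∀ s ≤ n, ‖(((List.range s).filter p).map w).sum‖ ≤ (b + E) / 2 := by
    intro s hs
    rw [chb_filter_sum, chb_range_sum]
    have hcongr : ∀ j, (if p j then w j else 0) = (2⁻¹ : ℝ) • (w j + x j • w j) := by
      intro j
      rcases hx j with h | h
      · rw [if_pos (by simp [hp, h]; try norm_num), h]; module
      · rw [if_neg (by simp [hp, h]; try norm_num), h]; module
    rw [Finset.sum_congr rfl fun j _ => hcongr j, ← Finset.smul_sum, Finset.sum_add_distrib]
    rw [norm_smul]
    have h1 := hpre s hs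
    have h2 := hT s hs
    have h3 := norm_add_le (∑ j ∈ Finset.range s, w j) (∑ j ∈ Finset.range s, x j • w j)
    have h4 : ‖(2⁻¹ : ℝ)‖ = 2⁻¹ := by norm_num
    rw [h4]
    nlinarith [norm_nonneg (∑ j ∈ Finset.range s, w j + ∑ j ∈ Finset.range s, x j • w j)]
  have hneg : ∀ s ≤ n, ‖(((List.range s).filter (fun k => !p k)).map w).sum‖ ≤ (b + E) / 2 := by
    intro s hs
    rw [chb_filter_sum, chb_range_sum]
    have hcongr : ∀ j, (if !p j then w j else 0) = (2⁻¹ : ℝ) • (w j - x j • w j) := by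
      intro j
      rcases hx j with h | h
      · rw [if_neg (by simp [hp, h]; try norm_num), h]; module
      · rw [if_pos (by simp [hp, h]; try norm_num), h]; module
    rw [Finset.sum_congr rfl fun j _ => hcongr j, ← Finset.smul_sum, Finset.sum_sub_distrib]
    rw [norm_smul]
    have h1 := hpre s hs
    have h2 := hT s hs
    have h3 := norm_sub_le (∑ j ∈ Finset.range s, w j) (∑ j ∈ Finset.range s, x j • w j)
    have h4 : ‖(2⁻¹ : ℝ)‖ = 2⁻¹ := by norm_num
    rw [h4]
    nlinarith [norm_nonneg (∑ j ∈ Finset.range s, w j - ∑ j ∈ Finset.range s, x j • w j)]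
  have hperm : l₁ ++ l₃.reverse ~ List.range n :=
    (List.Perm.append_left l₁ (List.reverse_perm l₃)).trans (List.filter_append_perm p _)
  refine ⟨l₁ ++ l₃.reverse, hperm, ?_⟩
  intro m hm
  rw [List.take_append, List.map_append, List.sum_append]
  by_cases hcase : m ≤ l₁.length
  · rw [Nat.sub_eq_zero_of_le hcase]
    simp only [List.take_zero, List.map_nil, List.sum_nil, add_zero]
    obtain ⟨s, hs, hfe⟩ := chb_take_filter p (List.range n) m
    rw [hl₁, hfe, List.take_range]
    exact hpos _ (min_le_right s n)
  · push_neg at hcase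
    rw [List.take_of_length_le hcase.le]
    -- prefix of the reversed negative list
    set s : ℕ := m - l₁.length with hsdef
    have htkrev : l₃.reverse.take s = (l₃.drop (l₃.length - s)).reverse := by
      have h := List.reverse_take (l := l₃.reverse) (i := s)
      rw [List.reverse_reverse, List.length_reverse] at h
      rw [← List.reverse_reverse (l₃.reverse.take s), h]
    rw [htkrev, List.map_reverse, List.sum_reverse]
    set r : ℕ := l₃.length - s with hrdef
    have hsplit : ((l₃.take r).map w).sum + ((l₃.drop r).map w).sum = (l₃.map w).sum := by
      rw [← List.sum_append, ← List.map_append, List.take_append_drop]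
    have htotal : (l₁.map w).sum + (l₃.map w).sum = 0 := by
      have h := ((List.filter_append_perm p (List.range n)).map w).sum_eq
      rw [List.map_append, List.sum_append] at h
      rw [hl₁, hl₃, h, chb_range_sum, hzero]
    have heq : (l₁.map w).sum + ((l₃.drop r).map w).sum = -((l₃.take r).map w).sum := by
      have h5 : (l₁.map w).sum + ((l₃.drop r).map w).sum =
          ((l₁.map w).sum + (l₃.map w).sum) - ((l₃.take r).map w).sum := by
        rw [← hsplit]; abel
      rw [h5, htotal, zero_sub]
    rw [heq, norm_neg]
    obtain ⟨s', hs', hfe⟩ := chb_take_filter (fun k => !p k) (List.range n) r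
    rw [hl₃, hfe, List.take_range]
    exact hneg _ (min_le_right s' n)
lemma chb_take_sum {M : Type*} [AddCommMonoid M] (f : ℕ → M) (J : List ℕ) :
    ∀ m ≤ J.length, ((J.take m).map f).sum = ∑ j ∈ Finset.range m, f (J.getD j 0) := by
  intro m
  induction m with
  | zero => simp
  | succ m ih =>
    intro hm
    have hm' : m < J.length := hm
    rw [List.take_succ, List.map_append, List.sum_append, ih hm'.le, Finset.sum_range_succ]
    congr 1
    rw [List.getElem?_eq_getElem hm', List.getD_eq_getElem J 0 hm']
    simp

lemma chb_Iic {M : Type*} [AddCommMonoid M] {n : ℕ} (t : Fin n) (g : ℕ → M) :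
    ∑ i ∈ Finset.Iic t, g i.val = ∑ j ∈ Finset.range (t.val + 1), g j := by
  refine Finset.sum_nbij' (fun i => (i : ℕ))
    (fun j => if h : j < n then ⟨j, h⟩ else t) ?_ ?_ ?_ ?_ ?_
  · intro a ha
    simp only [Finset.mem_Iic] at ha
    simp [Finset.mem_range, Nat.lt_succ_iff, Fin.le_def.mp ha]
  · intro j hj
    simp only [Finset.mem_range, Nat.lt_succ_iff] at hj
    have hjn : j < n := lt_of_le_of_lt hj t.isLt
    simp [hjn, Finset.mem_Iic, Fin.le_def, hj]
  · intro a ha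
    simp [a.isLt]
  · intro j hj
    simp only [Finset.mem_range, Nat.lt_succ_iff] at hj
    have hjn : j < n := lt_of_le_of_lt hj t.isLt
    simp [hjn]
  · intro a ha; rfl

/-- Chobanyan's reduction `S(‖·‖₂) ≤ E(‖·‖₂)`: if `E` is a valid `ℓ₂` prefix
discrepancy bound (for every finite sequence of vectors of norm at most `1` there are
signs making all partial signed sums of norm at most `E`), then for every zero-sum
sequence `v₁, …, vₙ` of vectors of norm at most `1` there is a permutation `π` with
all partial sums `‖∑_{i ≤ t} v_{π(i)}‖₂ ≤ E`. -/
theorem stmt15 (d n : ℕ) (E : ℝ)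
    (hE : ∀ m : ℕ, ∀ w : ℕ → EuclideanSpace ℝ (Fin d), (∀ i < m, ‖w i‖ ≤ 1) →
      ∃ x : ℕ → ℝ, (∀ i, x i = 1 ∨ x i = -1) ∧
        ∀ t ≤ m, ‖∑ i ∈ Finset.range t, x i • w i‖ ≤ E)
    (v : Fin n → EuclideanSpace ℝ (Fin d))
    (hv : ∀ i, ‖v i‖ ≤ 1) (hsum : ∑ i, v i = 0) :
    ∃ π : Equiv.Perm (Fin n), ∀ t : Fin n, ‖∑ i ∈ Finset.Iic t, v (π i)‖ ≤ E := by
  classical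
  rcases Nat.eq_zero_or_pos n with hn | hn
  · subst hn; exact ⟨1, fun t => t.elim0⟩
  haveI : NeZero n := ⟨hn.ne'⟩
  have hneF : (Finset.univ : Finset (Fin n)).Nonempty := Finset.univ_nonempty
  set F : Equiv.Perm (Fin n) → ℝ :=
    fun π => Finset.univ.sup' hneF (fun t : Fin n => ‖∑ i ∈ Finset.Iic t, v (π i)‖) with hF
  have hneP : (Finset.univ : Finset (Equiv.Perm (Fin n))).Nonempty := ⟨1, Finset.mem_univ 1⟩
  obtain ⟨π₀, -, hmin⟩ := Finset.exists_min_image Finset.univ F hneP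
  set b : ℝ := F π₀ with hb
  have hπ₀ : ∀ t, ‖∑ i ∈ Finset.Iic t, v (π₀ i)‖ ≤ b := by
    intro t
    rw [hb, hF]
    exact Finset.le_sup' (fun t : Fin n => ‖∑ i ∈ Finset.Iic t, v (π₀ i)‖) (Finset.mem_univ t)
  have hb0 : 0 ≤ b := le_trans (norm_nonneg _) (hπ₀ ⟨0, hn⟩)
  -- improvement step
  have improve : ∃ τ : Equiv.Perm (Fin n),
      ∀ t : Fin n, ‖∑ i ∈ Finset.Iic t, v (τ i)‖ ≤ (b + E) / 2 := by
    set w : ℕ → EuclideanSpace ℝ (Fin d) :=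
      fun k => if h : k < n then v (π₀ ⟨k, h⟩) else 0 with hw
    have hw1 : ∀ i < n, ‖w i‖ ≤ 1 := by
      intro i hi
      simp only [hw, dif_pos hi]
      exact hv _
    obtain ⟨x, hx1, hx2⟩ := hE n w hw1
    have hwv : ∀ i : Fin n, w i.val = v (π₀ i) := by
      intro i
      simp only [hw, dif_pos i.isLt]
    have hzero : ∑ i ∈ Finset.range n, w i = 0 := by
      rw [← Fin.sum_univ_eq_sum_range w n]
      rw [Finset.sum_congr rfl fun i _ => hwv i]
      rw [Equiv.sum_comp π₀ v]
      exact hsum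
    have hpre : ∀ m ≤ n, ‖∑ i ∈ Finset.range m, w i‖ ≤ b := by
      intro m hm
      cases m with
      | zero => simpa using hb0
      | succ m =>
        have hmn : m < n := hm
        have := chb_Iic (⟨m, hmn⟩ : Fin n) w
        rw [← this, Finset.sum_congr rfl fun i _ => hwv i]
        exact hπ₀ _
    obtain ⟨J, hJperm, hJ⟩ := chb_step n E b w hzero hpre x hx1 hx2
    have hJlen : J.length = n := hJperm.length_eq.trans List.length_range
    have hget : ∀ i : Fin n, J.getD i.val 0 < n := by
      intro i
      have h' : i.val < J.length := hJlen ▸ i.isLt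
      rw [List.getD_eq_getElem J 0 h']
      exact List.mem_range.mp (hJperm.mem_iff.mp (List.getElem_mem h'))
    set e : Fin n → Fin n := fun i => ⟨J.getD i.val 0, hget i⟩ with he
    have hnodup : J.Nodup := hJperm.nodup_iff.mpr List.nodup_range
    have hinj : Function.Injective e := by
      intro i j hij
      have hvv : J.getD i.val 0 = J.getD j.val 0 := congrArg Fin.val hij
      have hi' : i.val < J.length := hJlen ▸ i.isLt
      have hj' : j.val < J.length := hJlen ▸ j.isLt
      rw [List.getD_eq_getElem J 0 hi', List.getD_eq_getElem J 0 hj'] at hvv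
      have h9 := List.nodup_iff_injective_get.mp hnodup
        (show J.get ⟨i.val, hi'⟩ = J.get ⟨j.val, hj'⟩ by simpa using hvv)
      have h8 : i.val = j.val := by simpa using h9
      exact Fin.ext h8
    let ee : Equiv.Perm (Fin n) := Equiv.ofBijective e (Finite.injective_iff_bijective.mp hinj)
    refine ⟨ee.trans π₀, ?_⟩
    intro t
    have hkey : ∑ i ∈ Finset.Iic t, v ((ee.trans π₀) i)
        = ((J.take (t.val + 1)).map w).sum := by
      have h1 : ∀ i : Fin n, v ((ee.trans π₀) i) = w (J.getD i.val 0) := by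
        intro i
        have h2 : (ee.trans π₀) i = π₀ (e i) := rfl
        rw [h2, hw]
        simp only [dif_pos (hget i)]
        try rfl
      rw [Finset.sum_congr rfl fun i _ => h1 i,
        chb_Iic t (fun k => w (J.getD k 0)),
        chb_take_sum w J (t.val + 1) (by rw [hJlen]; exact t.isLt)]
    rw [hkey]
    exact hJ (t.val + 1) t.isLt
  obtain ⟨τ, hτ⟩ := improve
  have hbE : b ≤ (b + E) / 2 := by
    refine le_trans (hmin τ (Finset.mem_univ τ)) ?_
    exact Finset.sup'_le _ _ fun t _ => hτ t
  exact ⟨π₀, fun t => (hπ₀ t).trans (by linarith)⟩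
end
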